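/- For every integer p ≥ 1, the characteristic polynomials P_n of the adjacency matrices A_n of the finite Schreier graphs of the star automaton group 𝒢_{S_p} satisfy: P_1(λ) = (λ − 2p)(λ + 2)(λ − 2(p−1))^{p−1}, and for every n ≥ 1, P_{n+1}(λ) = (λ − 2(p−1))^{(p−1)(p+1)^n} · P_n(f_p(λ)), where f_p(λ) = λ² − 2(p−1)λ − 2p; that is, in ℝ[X], P_{n+1} = (X − 2(p−1))^{(p−1)(p+1)^n} · (P_n composed with X² − 2(p−1)X − 2p). -/

import Mathlib

open Polynomial Matrix

/-- The action of the generator `e_i` of the star automaton group `𝒢_{S_p}` on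
words of length `n` over the alphabet `X = {0, 1, …, p}`. -/
def starWord (p : ℕ) (i : Fin (p + 1)) : (n : ℕ) → (Fin n → Fin (p + 1)) → Fin n → Fin (p + 1)
  | 0, w => w
  | n + 1, w =>
    if w 0 = 0 then Fin.cons i (starWord p i n (Fin.tail w))
    else if w 0 = i then Fin.cons 0 (Fin.tail w)
    else w

/-- The real permutation matrix of `e_i^{(n)}`. -/
noncomputable def starMat (p n : ℕ) (i : Fin (p + 1)) :
    Matrix (Fin n → Fin (p + 1)) (Fin n → Fin (p + 1)) ℝ :=
  fun u v => if starWord p i n u = v then 1 else 0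

/-- The adjacency matrix `A_n = Σ_{i=1}^p (M_{i,n} + M_{i,n}ᵀ)` of the `n`-th
Schreier graph of the star automaton group `𝒢_{S_p}`. -/
noncomputable def starAdj (p n : ℕ) :
    Matrix (Fin n → Fin (p + 1)) (Fin n → Fin (p + 1)) ℝ :=
  ∑ i : Fin p, (starMat p n i.succ + (starMat p n i.succ)ᵀ)

def starInv (p : ℕ) (i : Fin (p + 1)) : (n : ℕ) → (Fin n → Fin (p + 1)) → Fin n → Fin (p + 1)
  | 0, w => w
  | n + 1, w =>
    if w 0 = i then Fin.cons 0 (starInv p i n (Fin.tail w))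
    else if w 0 = 0 then Fin.cons i (Fin.tail w)
    else w

lemma starInv_starWord (p : ℕ) (i : Fin (p + 1)) :
    ∀ n (w : Fin n → Fin (p + 1)), starInv p i n (starWord p i n w) = w
  | 0, _ => rfl
  | n + 1, w => by
    rw [starWord]
    by_cases h0 : w 0 = 0
    · rw [if_pos h0, starInv]
      simp [starInv_starWord p i n, ← h0, Fin.cons_self_tail]
    · rw [if_neg h0]
      by_cases hi : w 0 = i
      · rw [if_pos hi, starInv]
        have hne : i ≠ 0 := fun h => h0 (hi.trans h)
        rw [Fin.cons_zero, if_neg (Ne.symm hne), if_pos rfl, Fin.tail_cons, ← hi,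
          Fin.cons_self_tail]
      · rw [if_neg hi, starInv, if_neg hi, if_neg h0]

lemma starWord_injective (p n : ℕ) (i : Fin (p + 1)) :
    Function.Injective (starWord p i n) :=
  Function.LeftInverse.injective (starInv_starWord p i n)

lemma starWord_cons_zero (p n : ℕ) (i : Fin (p + 1)) (u : Fin n → Fin (p + 1)) :
    starWord p i (n + 1) (Fin.cons 0 u) = Fin.cons i (starWord p i n u) := by
  rw [starWord]; simp

lemma starWord_cons_self (p n : ℕ) (i : Fin (p + 1)) (hi : i ≠ 0) (u : Fin n → Fin (p + 1)) :
    starWord p i (n + 1) (Fin.cons i u) = Fin.cons 0 u := by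
  rw [starWord]; simp [hi]

lemma starWord_cons_ne (p n : ℕ) (i x : Fin (p + 1)) (hx : x ≠ 0) (hxi : x ≠ i)
    (u : Fin n → Fin (p + 1)) :
    starWord p i (n + 1) (Fin.cons x u) = Fin.cons x u := by
  rw [starWord]; simp [hx, hxi]

def consEquiv (p n : ℕ) :
    (Fin n → Fin (p + 1)) ⊕ (Fin p × (Fin n → Fin (p + 1))) ≃ (Fin (n + 1) → Fin (p + 1)) where
  toFun s := Sum.elim (fun u => Fin.cons 0 u) (fun iw => Fin.cons iw.1.succ iw.2) s
  invFun w := if h : w 0 = 0 then Sum.inl (Fin.tail w) else Sum.inr ((w 0).pred h, Fin.tail w)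
  left_inv s := by
    rcases s with u | ⟨i, u⟩ <;> simp [Fin.succ_ne_zero]
  right_inv w := by
    dsimp only
    by_cases h : w 0 = 0
    · rw [dif_pos h]
      simp only [Sum.elim_inl]
      rw [← h, Fin.cons_self_tail]
    · rw [dif_neg h]
      simp only [Sum.elim_inr, Fin.succ_pred]
      exact Fin.cons_self_tail w

lemma starMat_mul_transpose (p n : ℕ) (i : Fin (p + 1)) :
    starMat p n i * (starMat p n i)ᵀ = 1 := by
  ext u v
  simp only [Matrix.mul_apply, starMat, Matrix.transpose_apply, ite_mul, one_mul, zero_mul]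
  rw [Finset.sum_ite_eq Finset.univ (starWord p i n u) (fun w => if starWord p i n v = w then (1:ℝ) else 0)]
  simp [Matrix.one_apply, (starWord_injective p n i).eq_iff, eq_comm]

noncomputable def offBlock (p n : ℕ) :
    Matrix (Fin n → Fin (p + 1)) (Fin p × (Fin n → Fin (p + 1))) ℝ :=
  fun u iw => (starMat p n iw.1.succ + 1) u iw.2

lemma adj_succ_eq (p n : ℕ) :
    (starAdj p (n + 1)).submatrix (consEquiv p n) (consEquiv p n) =
      fromBlocks 0 (offBlock p n) (offBlock p n)ᵀ ((2 * ((p : ℝ) - 1)) • 1) := by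
  ext s t
  rcases s with u | ⟨i, u⟩ <;> rcases t with v | ⟨j, v⟩ <;>
    simp only [Matrix.submatrix_apply, starAdj, Matrix.sum_apply, Matrix.add_apply,
      Matrix.transpose_apply, consEquiv, Equiv.coe_fn_mk, Sum.elim_inl, Sum.elim_inr,
      fromBlocks_apply₁₁, fromBlocks_apply₁₂, fromBlocks_apply₂₁, fromBlocks_apply₂₂,
      Matrix.zero_apply]
  · -- inl inl
    rw [Finset.sum_eq_zero]
    intro k _
    simp [starMat, starWord_cons_zero, Fin.cons_inj, Fin.succ_ne_zero,
      (Fin.succ_ne_zero k).symm]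
  · -- inl, inr (j, v)
    rw [show (∑ k : Fin p,
        (starMat p (n+1) k.succ (Fin.cons 0 u) (Fin.cons j.succ v) +
         starMat p (n+1) k.succ (Fin.cons j.succ v) (Fin.cons 0 u))) =
      ∑ k : Fin p, (if k = j then
        ((if starWord p j.succ n u = v then (1:ℝ) else 0) + (if v = u then 1 else 0)) else 0) from
      Finset.sum_congr rfl ?_]
    · rw [Finset.sum_ite_eq']
      simp [offBlock, starMat, Matrix.one_apply, eq_comm]
    · intro k _
      by_cases hk : k = j
      · subst hk
        rw [if_pos rfl]
        simp [starMat, starWord_cons_zero, starWord_cons_self p n k.succ (Fin.succ_ne_zero k),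
          Fin.cons_inj, Fin.succ_ne_zero]
      · rw [if_neg hk]
        have h1 : j.succ ≠ k.succ := fun h => hk (Fin.succ_injective _ h).symm
        simp [starMat, starWord_cons_zero,
          starWord_cons_ne p n k.succ j.succ (Fin.succ_ne_zero j) h1,
          Fin.cons_inj, hk, (Fin.succ_ne_zero j).symm, Fin.succ_ne_zero]
  · -- inr (i,u), inl v
    rw [show (∑ k : Fin p,
        (starMat p (n+1) k.succ (Fin.cons i.succ u) (Fin.cons 0 v) +
         starMat p (n+1) k.succ (Fin.cons 0 v) (Fin.cons i.succ u))) =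
      ∑ k : Fin p, (if k = i then
        ((if u = v then (1:ℝ) else 0) + (if starWord p i.succ n v = u then 1 else 0)) else 0) from
      Finset.sum_congr rfl ?_]
    · rw [Finset.sum_ite_eq']
      simp [offBlock, starMat, Matrix.one_apply, eq_comm, add_comm]
    · intro k _
      by_cases hk : k = i
      · subst hk
        rw [if_pos rfl]
        simp [starMat, starWord_cons_zero, starWord_cons_self p n k.succ (Fin.succ_ne_zero k),
          Fin.cons_inj, Fin.succ_ne_zero]
      · rw [if_neg hk]
        have h1 : i.succ ≠ k.succ := fun h => hk (Fin.succ_injective _ h).symm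
        simp [starMat, starWord_cons_zero,
          starWord_cons_ne p n k.succ i.succ (Fin.succ_ne_zero i) h1,
          Fin.cons_inj, hk, (Fin.succ_ne_zero i).symm, Fin.succ_ne_zero]
  · -- inr inr
    by_cases hij : i = j ∧ u = v
    · obtain ⟨rfl, rfl⟩ := hij
      rw [show (∑ k : Fin p,
          (starMat p (n+1) k.succ (Fin.cons i.succ u) (Fin.cons i.succ u) +
           starMat p (n+1) k.succ (Fin.cons i.succ u) (Fin.cons i.succ u))) =
        ∑ k : Fin p, ((2:ℝ) - if k = i then 2 else 0) from Finset.sum_congr rfl ?_]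
      · rw [Finset.sum_sub_distrib, Finset.sum_ite_eq']
        simp only [Finset.sum_const, Finset.card_univ, Fintype.card_fin, Finset.mem_univ,
          if_true, nsmul_eq_mul, Matrix.smul_apply, Matrix.one_apply, if_pos rfl, smul_eq_mul,
          mul_one]
        ring
      · intro k _
        by_cases hk : k = i
        · subst hk
          simp [starMat, starWord_cons_self p n k.succ (Fin.succ_ne_zero k),
            Fin.cons_inj, (Fin.succ_ne_zero k).symm]
        · have h1 : i.succ ≠ k.succ := fun h => hk (Fin.succ_injective _ h).symm
          simp [starMat, starWord_cons_ne p n k.succ i.succ (Fin.succ_ne_zero i) h1, hk,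
            one_add_one_eq_two]
    · rw [Finset.sum_eq_zero, eq_comm]
      · have : ¬ ((i, u) = (j, v)) := by
          simp only [Prod.mk.injEq]; exact hij
        simp [Matrix.one_apply, this]
      · intro k _
        have hne : (Fin.cons i.succ u : Fin (n+1) → Fin (p+1)) ≠ Fin.cons j.succ v := by
          rw [Ne, Fin.cons_inj, not_and_or]
          rcases not_and_or.mp hij with h | h
          · exact Or.inl (fun hs => h (Fin.succ_injective _ hs))
          · exact Or.inr h
        have t1 : starMat p (n+1) k.succ (Fin.cons i.succ u) (Fin.cons j.succ v) = 0 := by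
          by_cases hk : k = i
          · subst hk
            simp [starMat, starWord_cons_self p n k.succ (Fin.succ_ne_zero k),
              Fin.cons_inj, (Fin.succ_ne_zero j).symm]
          · have h1 : i.succ ≠ k.succ := fun h => hk (Fin.succ_injective _ h).symm
            simp [starMat, starWord_cons_ne p n k.succ i.succ (Fin.succ_ne_zero i) h1, hne]
        have t2 : starMat p (n+1) k.succ (Fin.cons j.succ v) (Fin.cons i.succ u) = 0 := by
          by_cases hk : k = j
          · subst hk
            simp [starMat, starWord_cons_self p n k.succ (Fin.succ_ne_zero k),
              Fin.cons_inj, (Fin.succ_ne_zero i).symm]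
          · have h1 : j.succ ≠ k.succ := fun h => hk (Fin.succ_injective _ h).symm
            simp [starMat, starWord_cons_ne p n k.succ j.succ (Fin.succ_ne_zero j) h1, hne.symm]
        rw [t1, t2, add_zero]

lemma smul_one_map_C (r : ℝ) (m : Type*) [Fintype m] [DecidableEq m] :
    ((r • (1 : Matrix m m ℝ)).map (C : ℝ →+* ℝ[X])) = (C r) • (1 : Matrix m m ℝ[X]) := by
  ext i j
  by_cases h : i = j <;>
    simp [Matrix.map_apply, Matrix.smul_apply, Matrix.one_apply, h]

lemma offBlock_mul_transpose (p n : ℕ) :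
    offBlock p n * (offBlock p n)ᵀ = starAdj p n + (2 * (p : ℝ)) • 1 := by
  have key : ∀ i : Fin (p + 1), (starMat p n i + 1) * (starMat p n i + 1)ᵀ
      = starMat p n i + (starMat p n i)ᵀ + (2 : ℝ) • 1 := by
    intro i
    rw [Matrix.transpose_add, Matrix.transpose_one, mul_add, add_mul, add_mul,
      starMat_mul_transpose, mul_one, one_mul, one_mul, two_smul]
    abel
  ext u v
  rw [Matrix.mul_apply, Fintype.sum_prod_type]
  simp only [Matrix.transpose_apply]
  have hrow : ∀ i : Fin p, ∑ w, offBlock p n u (i, w) * offBlock p n v (i, w)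
      = (starMat p n i.succ + (starMat p n i.succ)ᵀ + (2 : ℝ) • 1) u v := by
    intro i
    rw [← key i.succ, Matrix.mul_apply]
    simp [offBlock, Matrix.transpose_apply]
  rw [Finset.sum_congr rfl fun i _ => hrow i]
  simp only [Matrix.add_apply, Finset.sum_add_distrib, Finset.sum_const, Finset.card_univ,
    Fintype.card_fin, Matrix.smul_apply, Matrix.sum_apply, nsmul_eq_mul, smul_eq_mul, starAdj]
  ring

lemma charpoly_succ' (p : ℕ) (hp : 1 ≤ p) (n : ℕ) :
    (starAdj p (n + 1)).charpoly =
      (X - C (2 * ((p : ℝ) - 1))) ^ ((p - 1) * (p + 1) ^ n) *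
        ((starAdj p n).charpoly.comp
          (X ^ 2 - C (2 * ((p : ℝ) - 1)) * X - C (2 * (p : ℝ)))) := by
  set c : ℝ := 2 * ((p : ℝ) - 1) with hc
  set f : ℝ[X] := X ^ 2 - C c * X - C (2 * (p : ℝ)) with hf
  set g : ℝ[X] := X - C c with hg
  set N : ℕ := (p + 1) ^ n with hN
  have hcard : Fintype.card (Fin n → Fin (p + 1)) = N := by
    simp [hN]
  have hcard2 : Fintype.card (Fin p × (Fin n → Fin (p + 1))) = p * N := by
    simp [Fintype.card_prod, hcard]
  -- Step A : identify the charpoly with that of the block matrix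
  have hA : (starAdj p (n + 1)).charpoly
      = (fromBlocks 0 (offBlock p n) (offBlock p n)ᵀ (c • 1)).charpoly := by
    have h2 := Matrix.charpoly_reindex (consEquiv p n).symm (starAdj p (n + 1))
    rw [Matrix.reindex_apply, Equiv.symm_symm] at h2
    rw [← h2, adj_succ_eq]
  -- the two auxiliary charmatrix computations
  have hz : charmatrix (0 : Matrix (Fin n → Fin (p + 1)) (Fin n → Fin (p + 1)) ℝ)
      = (X : ℝ[X]) • 1 := by
    ext i j
    by_cases h : i = j <;>
      simp [h, charmatrix_apply_eq, charmatrix_apply_ne, Matrix.smul_apply, Matrix.one_apply]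
  have hs : charmatrix (c • (1 : Matrix (Fin p × (Fin n → Fin (p + 1)))
      (Fin p × (Fin n → Fin (p + 1))) ℝ)) = g • 1 := by
    refine Matrix.ext fun i j => ?_
    by_cases h : i = j <;>
      simp [h, charmatrix_apply_eq, charmatrix_apply_ne, Matrix.smul_apply, Matrix.one_apply, hg]
  -- Step C : multiply by the elimination matrix E
  set E : Matrix ((Fin n → Fin (p + 1)) ⊕ (Fin p × (Fin n → Fin (p + 1))))
      ((Fin n → Fin (p + 1)) ⊕ (Fin p × (Fin n → Fin (p + 1)))) ℝ[X] :=
    fromBlocks (g • 1) 0 (((offBlock p n)ᵀ).map C) 1 with hE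
  have hTL : (X : ℝ[X]) • (1 : Matrix (Fin n → Fin (p+1)) (Fin n → Fin (p+1)) ℝ[X]) * (g • 1)
      + (-(offBlock p n).map (C : ℝ →+* ℝ[X])) * (((offBlock p n)ᵀ).map C)
      = f • 1 - (starAdj p n).map C := by
    rw [Matrix.smul_mul, Matrix.one_mul, Matrix.neg_mul, ← Matrix.map_mul,
      offBlock_mul_transpose, Matrix.map_add _ (map_add C), smul_one_map_C, smul_smul]
    have hXg : X * g - C (2 * (p : ℝ)) = f := by rw [hg, hf]; ring
    rw [← hXg, sub_smul]
    abel
  have hTR : (X : ℝ[X]) • (1 : Matrix (Fin n → Fin (p+1)) (Fin n → Fin (p+1)) ℝ[X])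
        * (0 : Matrix (Fin n → Fin (p+1)) (Fin p × (Fin n → Fin (p+1))) ℝ[X])
      + (-(offBlock p n).map (C : ℝ →+* ℝ[X]))
        * (1 : Matrix (Fin p × (Fin n → Fin (p+1))) (Fin p × (Fin n → Fin (p+1))) ℝ[X])
      = -(offBlock p n).map C := by
    simp
  have hBL : (-((offBlock p n)ᵀ).map (C : ℝ →+* ℝ[X]))
        * (g • (1 : Matrix (Fin n → Fin (p+1)) (Fin n → Fin (p+1)) ℝ[X]))
      + (g • (1 : Matrix (Fin p × (Fin n → Fin (p+1))) (Fin p × (Fin n → Fin (p+1))) ℝ[X]))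
        * (((offBlock p n)ᵀ).map C) = 0 := by
    rw [Matrix.neg_mul, Matrix.mul_smul, Matrix.mul_one, Matrix.smul_mul, Matrix.one_mul,
      neg_add_cancel]

  have hBR : (-((offBlock p n)ᵀ).map (C : ℝ →+* ℝ[X]))
        * (0 : Matrix (Fin n → Fin (p+1)) (Fin p × (Fin n → Fin (p+1))) ℝ[X])
      + (g • (1 : Matrix (Fin p × (Fin n → Fin (p+1))) (Fin p × (Fin n → Fin (p+1))) ℝ[X]))
        * (1 : Matrix (Fin p × (Fin n → Fin (p+1))) (Fin p × (Fin n → Fin (p+1))) ℝ[X])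
      = g • 1 := by
    simp
  have hmul : charmatrix (fromBlocks 0 (offBlock p n) (offBlock p n)ᵀ (c • 1)) * E =
      fromBlocks (f • 1 - (starAdj p n).map C) (-(offBlock p n).map C) 0 (g • 1) := by
    rw [charmatrix_fromBlocks, hz, hs, hE, fromBlocks_multiply, hTL, hTR, hBL, hBR]
  -- Step D : determinants
  have hdetE : E.det = g ^ N := by
    rw [hE, Matrix.det_fromBlocks_zero₁₂, Matrix.det_one, mul_one, Matrix.det_smul,
      Matrix.det_one, mul_one, hcard]
  have hmap : f • (1 : Matrix (Fin n → Fin (p+1)) (Fin n → Fin (p+1)) ℝ[X])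
      - (starAdj p n).map C
      = (charmatrix (starAdj p n)).map (eval₂RingHom (C : ℝ →+* ℝ[X]) f) := by
    refine Matrix.ext fun i j => ?_
    by_cases h : i = j
    · subst h
      simp [charmatrix_apply_eq, Matrix.map_apply, Matrix.sub_apply, Matrix.smul_apply,
        Matrix.one_apply, coe_eval₂RingHom, eval₂_sub, eval₂_X, eval₂_C, smul_eq_mul]
    · simp [h, charmatrix_apply_ne _ _ _ h, Matrix.map_apply, Matrix.sub_apply,
        Matrix.smul_apply, Matrix.one_apply, coe_eval₂RingHom, eval₂_neg, eval₂_C]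
  have hTLdet : (f • (1 : Matrix (Fin n → Fin (p+1)) (Fin n → Fin (p+1)) ℝ[X])
      - (starAdj p n).map C).det = (starAdj p n).charpoly.comp f := by
    rw [hmap, ← RingHom.mapMatrix_apply, ← RingHom.map_det]
    rfl
  have hdetprod : (charmatrix (fromBlocks 0 (offBlock p n) (offBlock p n)ᵀ (c • 1))).det * g ^ N
      = ((starAdj p n).charpoly.comp f) * g ^ (p * N) := by
    rw [← hdetE, ← Matrix.det_mul, hmul, Matrix.det_fromBlocks_zero₂₁, hTLdet, Matrix.det_smul,
      Matrix.det_one, mul_one, hcard2]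
  have hexp : (p - 1) * N + N = p * N := by
    have hp' : p - 1 + 1 = p := Nat.succ_pred_eq_of_pos hp
    calc (p - 1) * N + N = ((p - 1) + 1) * N := by ring
    _ = p * N := by rw [hp']
  have hglue : (starAdj p (n + 1)).charpoly * g ^ N
      = (((starAdj p n).charpoly.comp f) * g ^ ((p - 1) * N)) * g ^ N := by
    rw [hA, Matrix.charpoly, hdetprod, mul_assoc, ← pow_add, hexp]
  have hg0 : g ^ N ≠ 0 := pow_ne_zero _ (Polynomial.X_sub_C_ne_zero c)
  have hfinal := mul_right_cancel₀ hg0 hglue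
  rw [hfinal, mul_comm]

lemma charpoly_zero' (p : ℕ) : (starAdj p 0).charpoly = X - C (2 * (p : ℝ)) := by
  have hd : ∀ d e : Fin 0 → Fin (p + 1), starAdj p 0 d e = 2 * (p : ℝ) := by
    intro d e
    have : d = e := Subsingleton.elim d e
    subst this
    simp [starAdj, Matrix.sum_apply, Matrix.add_apply, Matrix.transpose_apply, starMat,
      starWord]
    ring
  rw [Matrix.charpoly, Matrix.det_unique, charmatrix_apply_eq, hd]

/-- For every `p ≥ 1`: `P_1(λ) = (λ − 2p)(λ + 2)(λ − 2(p−1))^{p−1}` and, for every `n ≥ 1`,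
`P_{n+1}(λ) = (λ − 2(p−1))^{(p−1)(p+1)^n} · P_n(λ² − 2(p−1)λ − 2p)`. -/
theorem stmt2 (p : ℕ) (hp : 1 ≤ p) :
    (starAdj p 1).charpoly =
      (X - C (2 * (p : ℝ))) * (X + C 2) * (X - C (2 * ((p : ℝ) - 1))) ^ (p - 1) ∧
    ∀ n : ℕ, 1 ≤ n →
      (starAdj p (n + 1)).charpoly =
        (X - C (2 * ((p : ℝ) - 1))) ^ ((p - 1) * (p + 1) ^ n) *
          ((starAdj p n).charpoly.comp
            (X ^ 2 - C (2 * ((p : ℝ) - 1)) * X - C (2 * (p : ℝ)))) := by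
  refine ⟨?_, fun n _ => charpoly_succ' p hp n⟩
  have h := charpoly_succ' p hp 0
  rw [charpoly_zero' p] at h
  rw [show (0 : ℕ) + 1 = 1 from rfl] at h
  rw [h, pow_zero, mul_one, sub_comp, X_comp, C_comp]
  have h1 : (C (2 * ((p : ℝ) - 1)) : ℝ[X]) = C (2 * (p : ℝ)) - 2 := by
    rw [show (2 : ℝ[X]) = C 2 from (map_ofNat C 2).symm, ← C_sub]; ring_nf
  rw [mul_comm]
  congr 1
  rw [h1, show (C (2:ℝ) : ℝ[X]) = 2 from map_ofNat C 2]
  ring
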